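/- arXiv:1205.1599 — 2 statements merged into one kernel-verified Lean document; each statement's English description precedes it below -/
import Mathlib

section
/- Let q be an odd prime power, n ≥ 2, and let α ∈ F_q[x] be a nonzero polynomial with deg α < n. Let a_1, …, a_{n−1} be indeterminates over F_q, put f(x) = x^n + a_{n−1}x^{n−1} + ⋯ + a_1 x ∈ F_q[a_1,…,a_{n−1}][x], and let D_f(t) = disc_x(f(x)+t) and D_{f+α}(t) = disc_x(f(x)+α(x)+t), both polynomials in t of degree at most n−1 with coefficients in F_q[a_1,…,a_{n−1}]. Then the resultant R(a) = Res_t(D_f(t), D_{f+α}(t)), taken with respect to the formal degree n−1 in t for both polynomials, has total degree at most 3(n−1)² as a polynomial in a_1, …, a_{n−1}. -/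
open Polynomial

noncomputable section
open scoped Classical

/-- The Sylvester matrix of `P` and `Q` with respect to formal degrees `m` and `n`. -/
def sylvesterMatrix {R : Type*} [CommRing R] (m n : ℕ) (P Q : Polynomial R) :
    Matrix (Fin (n + m)) (Fin (n + m)) R :=
  Matrix.of fun i j =>
    if (i : ℕ) < n then
      (if (i : ℕ) ≤ (j : ℕ) ∧ (j : ℕ) ≤ (i : ℕ) + m then P.coeff (m + i - j) else 0)
    else
      (if (i : ℕ) - n ≤ (j : ℕ) ∧ (j : ℕ) ≤ (i : ℕ) then Q.coeff ((i : ℕ) - j) else 0)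

/-- The resultant of `P` and `Q` with respect to formal degrees `m` and `n`:
the determinant of the `(m+n) × (m+n)` Sylvester matrix. -/
def presultant {R : Type*} [CommRing R] (m n : ℕ) (P Q : Polynomial R) : R :=
  (sylvesterMatrix m n P Q).det

/-- The discriminant of a polynomial `P` of degree `m`; for monic `P` this agrees with the
standard discriminant `∏_{i<j} (r_i - r_j)²` over the roots of `P` in an algebraic closure. -/
def pdisc {R : Type*} [CommRing R] (P : Polynomial R) : R :=
  (-1) ^ (P.natDegree * (P.natDegree - 1) / 2) *
    presultant P.natDegree (P.natDegree - 1) P (Polynomial.derivative P)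

/-- `Dpoly g` is `D_g(t) = disc_x (g(x) + t)`, a polynomial in `t`. -/
def Dpoly {R : Type*} [CommRing R] (g : Polynomial R) : Polynomial R :=
  pdisc (g.map Polynomial.C + Polynomial.C Polynomial.X)

/-- `fPoly n a = x^n + a_{n-1} x^{n-1} + ... + a_1 x`. -/
def fPoly {R : Type*} [CommRing R] (n : ℕ) (a : Fin (n - 1) → R) : Polynomial R :=
  X ^ n + ∑ i : Fin (n - 1), Polynomial.C (a i) * X ^ ((i : ℕ) + 1)

section Bdd
variable {σ F : Type*} [CommRing F]

/-- `Bdd w p` : each coefficient of `p` (a poly in `t` over multivariate polys)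
satisfies `totalDegree + index ≤ w`. -/
def Bdd (w : ℕ) (p : Polynomial (MvPolynomial σ F)) : Prop :=
  ∀ k, p.coeff k ≠ 0 → (p.coeff k).totalDegree + k ≤ w

lemma bdd_zero (w : ℕ) : Bdd w (0 : Polynomial (MvPolynomial σ F)) := by
  intro k hk; simp at hk

lemma bdd_one : Bdd 0 (1 : Polynomial (MvPolynomial σ F)) := by
  intro k hk
  rcases Nat.eq_zero_or_pos k with h | h
  · subst h; simp [MvPolynomial.totalDegree_one]
  · exfalso; apply hk; simp [Polynomial.coeff_one, Nat.pos_iff_ne_zero.mp h]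

lemma Bdd.mono {w w' : ℕ} (h : w ≤ w') {p : Polynomial (MvPolynomial σ F)}
    (hp : Bdd w p) : Bdd w' p := fun k hk => (hp k hk).trans h

lemma Bdd.add {w : ℕ} {p q : Polynomial (MvPolynomial σ F)}
    (hp : Bdd w p) (hq : Bdd w q) : Bdd w (p + q) := by
  intro k hk
  rw [Polynomial.coeff_add] at hk ⊢
  by_cases h1 : p.coeff k = 0
  · rw [h1, zero_add] at hk ⊢; exact hq k hk
  by_cases h2 : q.coeff k = 0
  · rw [h2, add_zero] at hk ⊢; exact hp k hk
  have := MvPolynomial.totalDegree_add (p.coeff k) (q.coeff k)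
  have b1 := hp k h1; have b2 := hq k h2
  omega

lemma Bdd.neg {w : ℕ} {p : Polynomial (MvPolynomial σ F)}
    (hp : Bdd w p) : Bdd w (-p) := by
  intro k hk
  rw [Polynomial.coeff_neg] at hk ⊢
  have : (-(p.coeff k)).totalDegree = (p.coeff k).totalDegree := by
    simp [MvPolynomial.totalDegree, MvPolynomial.support_neg]
  rw [this]
  exact hp k (by simpa using hk)

lemma Bdd.mul {w v : ℕ} {p q : Polynomial (MvPolynomial σ F)}
    (hp : Bdd w p) (hq : Bdd v q) : Bdd (w + v) (p * q) := by
  intro k hk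
  rw [Polynomial.coeff_mul] at hk ⊢
  -- get a nonzero term to bound k
  obtain ⟨ij, hij, hne⟩ : ∃ ij ∈ Finset.HasAntidiagonal.antidiagonal k,
      p.coeff ij.1 * q.coeff ij.2 ≠ 0 := by
    by_contra h
    push_neg at h
    exact hk (Finset.sum_eq_zero h)
  have h1 : p.coeff ij.1 ≠ 0 := fun h => hne (by rw [h, zero_mul])
  have h2 : q.coeff ij.2 ≠ 0 := fun h => hne (by rw [h, mul_zero])
  have hijk : ij.1 + ij.2 = k := (Finset.HasAntidiagonal.mem_antidiagonal.mp hij)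
  have hk_le : k ≤ w + v := by
    have := hp ij.1 h1; have := hq ij.2 h2; omega
  have : (∑ x ∈ Finset.HasAntidiagonal.antidiagonal k, p.coeff x.1 * q.coeff x.2).totalDegree
      ≤ (w + v) - k := by
    apply MvPolynomial.totalDegree_finsetSum_le
    intro x hx
    by_cases hx1 : p.coeff x.1 = 0
    · simp [hx1]
    by_cases hx2 : q.coeff x.2 = 0
    · simp [hx2]
    have hb1 := hp x.1 hx1; have hb2 := hq x.2 hx2
    have hxk : x.1 + x.2 = k := Finset.HasAntidiagonal.mem_antidiagonal.mp hx
    calc (p.coeff x.1 * q.coeff x.2).totalDegree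
        ≤ (p.coeff x.1).totalDegree + (q.coeff x.2).totalDegree :=
          MvPolynomial.totalDegree_mul _ _
      _ ≤ (w + v) - k := by omega
  omega

lemma bdd_sum {ι : Type*} (s : Finset ι) (f : ι → Polynomial (MvPolynomial σ F))
    (w : ℕ) (h : ∀ i ∈ s, Bdd w (f i)) : Bdd w (∑ i ∈ s, f i) := by
  classical
  induction s using Finset.induction_on with
  | empty => simpa using bdd_zero w
  | insert _ _ hni ih =>
    rename_i a s'
    rw [Finset.sum_insert hni]
    exact (h a (Finset.mem_insert_self a s')).add
      (ih fun i hi => h i (Finset.mem_insert_of_mem hi))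

lemma bdd_prod {ι : Type*} (s : Finset ι) (f : ι → Polynomial (MvPolynomial σ F))
    (w : ι → ℕ) (h : ∀ i ∈ s, Bdd (w i) (f i)) :
    Bdd (∑ i ∈ s, w i) (∏ i ∈ s, f i) := by
  classical
  induction s using Finset.induction_on with
  | empty => simpa using bdd_one
  | insert _ _ hni ih =>
    rename_i a s'
    rw [Finset.sum_insert hni, Finset.prod_insert hni]
    exact (h a (Finset.mem_insert_self a s')).mul
      (ih fun i hi => h i (Finset.mem_insert_of_mem hi))

lemma Bdd.units_smul {w : ℕ} {p : Polynomial (MvPolynomial σ F)} (u : ℤˣ)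
    (hp : Bdd w p) : Bdd w (u • p) := by
  rcases Int.units_eq_one_or u with h | h <;> subst h
  · simpa using hp
  · have : (-1 : ℤˣ) • p = -p := by
      simp [Units.smul_def]
    rw [this]; exact hp.neg

lemma bdd_det {N : ℕ} (M : Matrix (Fin N) (Fin N) (Polynomial (MvPolynomial σ F)))
    (w : Fin N → ℕ) (h : ∀ i j, Bdd (w j) (M i j)) :
    Bdd (∑ j, w j) M.det := by
  rw [Matrix.det_apply]
  apply bdd_sum
  intro perm _
  exact Bdd.units_smul _ (bdd_prod _ _ _ fun i _ => h (perm i) i)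

end Bdd

section Inner
variable {σ F : Type*} [CommRing F]

lemma bdd_C {w : ℕ} {c : MvPolynomial σ F} (hc : c.totalDegree ≤ w) :
    Bdd w (Polynomial.C c) := by
  intro k hk
  rcases Nat.eq_zero_or_pos k with h | h
  · subst h; simpa using hc
  · exfalso; apply hk; simp [Polynomial.coeff_C, Nat.pos_iff_ne_zero.mp h]

lemma bdd_X : Bdd 1 (Polynomial.X : Polynomial (MvPolynomial σ F)) := by
  intro k hk
  by_cases h : k = 1
  · subst h; simp [Polynomial.coeff_X_one, MvPolynomial.totalDegree_one]
  · exfalso; apply hk; rw [Polynomial.coeff_X]; simp [Ne.symm h]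

lemma tD_natCast (k : ℕ) : ((k : MvPolynomial σ F)).totalDegree = 0 := by
  rw [← map_natCast (MvPolynomial.C : F →+* MvPolynomial σ F) k]
  exact MvPolynomial.totalDegree_C _

lemma Bdd.mul_constC {w : ℕ} {p : Polynomial (MvPolynomial σ F)} (hp : Bdd w p)
    (c : MvPolynomial σ F) (hc : c.totalDegree = 0) : Bdd w (p * Polynomial.C c) := by
  intro k hk
  rw [Polynomial.coeff_mul_C] at hk ⊢
  have h1 : p.coeff k ≠ 0 := fun h => hk (by rw [h, zero_mul])
  have h2 := MvPolynomial.totalDegree_mul (p.coeff k) c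
  have h3 := hp k h1
  omega

/-- weight function for the inner Sylvester matrix: column 0 has weight 0. -/
lemma sum_weight (K : ℕ) (hK : 1 ≤ K) :
    (∑ j : Fin K, if (j : ℕ) = 0 then 0 else 1) = K - 1 := by
  obtain ⟨K', rfl⟩ : ∃ K', K = K' + 1 := ⟨K - 1, by omega⟩
  rw [Fin.sum_univ_succ]
  simp

lemma bdd_presultant {m nn : ℕ} (hm : 1 ≤ m)
    (P Q : Polynomial (Polynomial (MvPolynomial σ F)))
    (hP : ∀ s, Bdd 1 (P.coeff s)) (hQ : ∀ s, Bdd 1 (Q.coeff s))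
    (hPm : Bdd 0 (P.coeff m)) (hQn : Bdd 0 (Q.coeff nn)) :
    Bdd (nn + m - 1) (presultant m nn P Q) := by
  have h := bdd_det (sylvesterMatrix m nn P Q)
    (fun j => if (j : ℕ) = 0 then 0 else 1) ?_
  · rwa [sum_weight (nn + m) (by omega)] at h
  · intro i j
    show Bdd (if (j : ℕ) = 0 then 0 else 1) _
    by_cases h0 : (j : ℕ) = 0
    · rw [if_pos h0]
      dsimp [sylvesterMatrix]
      by_cases h1 : (i : ℕ) < nn
      · rw [if_pos h1]
        by_cases h2 : (i : ℕ) ≤ (j : ℕ) ∧ (j : ℕ) ≤ (i : ℕ) + m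
        · rw [if_pos h2]
          have he : m + (i : ℕ) - (j : ℕ) = m := by omega
          rw [he]; exact hPm
        · rw [if_neg h2]; exact bdd_zero 0
      · rw [if_neg h1]
        by_cases h2 : (i : ℕ) - nn ≤ (j : ℕ) ∧ (j : ℕ) ≤ (i : ℕ)
        · rw [if_pos h2]
          have he : (i : ℕ) - (j : ℕ) = nn := by omega
          rw [he]; exact hQn
        · rw [if_neg h2]; exact bdd_zero 0
    · rw [if_neg h0]
      dsimp [sylvesterMatrix]
      split_ifs with h1 h2 h3
      · exact hP _
      · exact bdd_zero 1
      · exact hQ _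
      · exact bdd_zero 1

lemma Bdd.neg_one_pow_mul {w : ℕ} {p : Polynomial (MvPolynomial σ F)}
    (hp : Bdd w p) (e : ℕ) : Bdd w ((-1) ^ e * p) := by
  induction e with
  | zero => simpa using hp
  | succ k ih =>
    have h : ((-1 : Polynomial (MvPolynomial σ F)) ^ (k + 1)) * p
        = -((-1) ^ k * p) := by ring
    rw [h]; exact ih.neg

lemma bdd_pdisc {n : ℕ} (hn : 2 ≤ n)
    (P : Polynomial (Polynomial (MvPolynomial σ F)))
    (hdeg : P.natDegree = n)
    (hP : ∀ s, Bdd 1 (P.coeff s)) (hPn : Bdd 0 (P.coeff n)) :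
    Bdd (2 * n - 2) (pdisc P) := by
  have hQ : ∀ s, Bdd 1 ((derivative P).coeff s) := by
    intro s
    rw [Polynomial.coeff_derivative]
    have hc : ((s : Polynomial (MvPolynomial σ F)) + 1)
        = Polynomial.C ((s + 1 : ℕ) : MvPolynomial σ F) := by
      rw [map_natCast]; push_cast; ring
    rw [hc]
    exact (hP (s + 1)).mul_constC _ (tD_natCast _)
  have hQn : Bdd 0 ((derivative P).coeff (n - 1)) := by
    rw [Polynomial.coeff_derivative]
    have hs : n - 1 + 1 = n := by omega
    have hc : ((n - 1 : ℕ) : Polynomial (MvPolynomial σ F)) + 1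
        = Polynomial.C ((n - 1 + 1 : ℕ) : MvPolynomial σ F) := by
      rw [map_natCast]; push_cast; ring
    rw [hs, hc]
    exact hPn.mul_constC _ (tD_natCast _)
  have hres := bdd_presultant (m := n) (nn := n - 1) (by omega) P (derivative P)
    hP hQ hPn hQn
  have hres' : Bdd (2 * n - 2) (presultant n (n - 1) P (derivative P)) :=
    hres.mono (by omega)
  rw [pdisc, hdeg]
  exact hres'.neg_one_pow_mul _

end Inner

section Outer
variable {σ F : Type*} [CommRing F]

lemma tD_neg (p : MvPolynomial σ F) : (-p).totalDegree = p.totalDegree := by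
  simp [MvPolynomial.totalDegree, MvPolynomial.support_neg]

lemma totalDegree_presultant_le (N : ℕ) (P Q : Polynomial (MvPolynomial σ F))
    (hP : Bdd (2 * N) P) (hQ : Bdd (2 * N) Q) :
    (presultant N N P Q).totalDegree ≤ 3 * N ^ 2 := by
  unfold presultant
  rw [Matrix.det_apply]
  apply MvPolynomial.totalDegree_finsetSum_le
  intro perm _
  have hsmul : ∀ (u : ℤˣ) (x : MvPolynomial σ F),
      (u • x).totalDegree = x.totalDegree := by
    intro u x
    rcases Int.units_eq_one_or u with h | h <;> subst h
    · simp
    · have h2 : (-1 : ℤˣ) • x = -x := by simp [Units.smul_def]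
      rw [h2, tD_neg]
  rw [hsmul]
  set M := sylvesterMatrix N N P Q with hM
  by_cases hz : ∃ i, M (perm i) i = 0
  · obtain ⟨i, hi⟩ := hz
    rw [Finset.prod_eq_zero (f := fun j => M (perm j) j) (Finset.mem_univ i) hi]
    simp
  push_neg at hz
  set s : Fin (N + N) → ℕ := fun i =>
    if ((perm i : Fin (N + N)) : ℕ) < N then N + ((perm i : Fin (N + N)) : ℕ) - (i : ℕ)
    else ((perm i : Fin (N + N)) : ℕ) - (i : ℕ) with hs
  have key : ∀ i, (M (perm i) i).totalDegree + s i ≤ 2 * N ∧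
      s i + (i : ℕ) = (if ((perm i : Fin (N + N)) : ℕ) < N
        then N + ((perm i : Fin (N + N)) : ℕ) else ((perm i : Fin (N + N)) : ℕ)) := by
    intro i
    have hne := hz i
    rw [hM] at hne
    dsimp [sylvesterMatrix] at hne
    rw [hM]
    simp only [hs]
    dsimp [sylvesterMatrix]
    by_cases hr : ((perm i : Fin (N + N)) : ℕ) < N
    · simp only [if_pos hr] at hne ⊢
      by_cases hb : ((perm i : Fin (N + N)) : ℕ) ≤ (i : ℕ) ∧
          (i : ℕ) ≤ ((perm i : Fin (N + N)) : ℕ) + N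
      · simp only [if_pos hb] at hne ⊢
        have h1 := hP _ hne
        exact ⟨h1, by omega⟩
      · rw [if_neg hb] at hne; exact absurd rfl hne
    · simp only [if_neg hr] at hne ⊢
      by_cases hb : ((perm i : Fin (N + N)) : ℕ) - N ≤ (i : ℕ) ∧
          (i : ℕ) ≤ ((perm i : Fin (N + N)) : ℕ)
      · simp only [if_pos hb] at hne ⊢
        have h1 := hQ _ hne
        exact ⟨h1, by omega⟩
      · rw [if_neg hb] at hne; exact absurd rfl hne
  have hsum_s : (∑ i, s i) + (∑ i : Fin (N + N), (i : ℕ)) =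
      N * N + (∑ i : Fin (N + N), (i : ℕ)) := by
    have h1 : (∑ i, s i) + (∑ i : Fin (N + N), (i : ℕ))
        = ∑ i, (s i + (i : ℕ)) := (Finset.sum_add_distrib).symm
    rw [h1, Finset.sum_congr rfl (fun i _ => (key i).2)]
    have h2 : ∀ i : Fin (N + N),
        (if ((perm i : Fin (N + N)) : ℕ) < N
          then N + ((perm i : Fin (N + N)) : ℕ) else ((perm i : Fin (N + N)) : ℕ))
        = (if ((perm i : Fin (N + N)) : ℕ) < N then N else 0)
            + ((perm i : Fin (N + N)) : ℕ) := by
      intro i; split_ifs <;> omega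
    rw [Finset.sum_congr rfl (fun i _ => h2 i), Finset.sum_add_distrib]
    congr 1
    · rw [Equiv.sum_comp perm (fun r : Fin (N + N) => if (r : ℕ) < N then N else 0)]
      rw [Fin.sum_univ_add (f := fun r : Fin (N + N) => if (r : ℕ) < N then N else 0)]
      simp
    · exact Equiv.sum_comp perm (fun r : Fin (N + N) => (r : ℕ))
  have hsum_s' : ∑ i, s i = N * N := by omega
  have hbound : (∑ i, (M (perm i) i).totalDegree) + ∑ i, s i
      ≤ (N + N) * (2 * N) := by
    have := Finset.sum_le_sum (fun i (_ : i ∈ Finset.univ) => (key i).1)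
    rw [Finset.sum_add_distrib] at this
    simpa [Finset.sum_const, Finset.card_univ, mul_comm] using this
  have hprod := MvPolynomial.totalDegree_finset_prod Finset.univ
    (fun i => M (perm i) i)
  have h4 : N ^ 2 = N * N := sq N
  have h5 : (N + N) * (2 * N) = 4 * (N * N) := by ring
  omega

end Outer

section Specific
variable {F : Type*} [CommRing F] [Nontrivial F]

/-- The big polynomial in `x` whose `pdisc` we study. -/
def bigP (n : ℕ) (F : Type*) [CommRing F] (β : Polynomial F) :
    Polynomial (Polynomial (MvPolynomial (Fin (n - 1)) F)) :=
  (X : Polynomial (Polynomial (MvPolynomial (Fin (n - 1)) F))) ^ n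
    + ∑ i : Fin (n - 1),
        Polynomial.C (Polynomial.C (MvPolynomial.X i)) * X ^ ((i : ℕ) + 1)
    + β.map ((Polynomial.C : MvPolynomial (Fin (n - 1)) F →+*
        Polynomial (MvPolynomial (Fin (n - 1)) F)).comp
        (MvPolynomial.C : F →+* MvPolynomial (Fin (n - 1)) F))
    + Polynomial.C Polynomial.X

lemma bigP_coeff (n : ℕ) (β : Polynomial F) (s : ℕ) :
    (bigP n F β).coeff s
    = (if s = n then 1 else 0)
      + (∑ i : Fin (n - 1),
          if s = (i : ℕ) + 1 then Polynomial.C (MvPolynomial.X i) else 0)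
      + Polynomial.C (MvPolynomial.C (β.coeff s))
      + (if s = 0 then Polynomial.X else 0) := by
  simp [bigP, Polynomial.coeff_add, Polynomial.coeff_X_pow, Polynomial.finset_sum_coeff,
    Polynomial.coeff_C_mul, Polynomial.coeff_C, Polynomial.coeff_map, mul_ite,
    mul_one, mul_zero, apply_ite]

lemma bigP_coeff_top (n : ℕ) (hn : 2 ≤ n) (β : Polynomial F)
    (hβ : β.degree < (n : WithBot ℕ)) :
    (bigP n F β).coeff n = 1 := by
  rw [bigP_coeff]
  have h1 : β.coeff n = 0 :=
    Polynomial.coeff_eq_zero_of_degree_lt hβ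
  have h2 : (∑ i : Fin (n - 1),
      if n = (i : ℕ) + 1 then Polynomial.C (MvPolynomial.X i) else 0)
      = (0 : Polynomial (MvPolynomial (Fin (n - 1)) F)) := by
    apply Finset.sum_eq_zero
    intro i _
    have : (i : ℕ) + 1 < n := by have := i.isLt; omega
    rw [if_neg (by omega)]
  simp [h1, h2, if_neg (by omega : ¬ n = 0)]

lemma bigP_coeff_zero_of_gt (n : ℕ) (hn : 2 ≤ n) (β : Polynomial F)
    (hβ : β.degree < (n : WithBot ℕ)) (s : ℕ) (hs : n < s) :
    (bigP n F β).coeff s = 0 := by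
  rw [bigP_coeff]
  have h1 : β.coeff s = 0 := by
    apply Polynomial.coeff_eq_zero_of_degree_lt
    exact lt_of_lt_of_le hβ (by exact_mod_cast Nat.cast_le.mpr hs.le)
  have h2 : (∑ i : Fin (n - 1),
      if s = (i : ℕ) + 1 then Polynomial.C (MvPolynomial.X i) else 0)
      = (0 : Polynomial (MvPolynomial (Fin (n - 1)) F)) := by
    apply Finset.sum_eq_zero
    intro i _
    have : (i : ℕ) + 1 < n := by have := i.isLt; omega
    rw [if_neg (by omega)]
  simp [h1, h2, if_neg (by omega : ¬ s = n), if_neg (by omega : ¬ s = 0)]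

lemma bigP_natDegree (n : ℕ) (hn : 2 ≤ n) (β : Polynomial F)
    (hβ : β.degree < (n : WithBot ℕ)) :
    (bigP n F β).natDegree = n := by
  apply le_antisymm
  · exact Polynomial.natDegree_le_iff_coeff_eq_zero.mpr
      (fun N hN => bigP_coeff_zero_of_gt n hn β hβ N hN)
  · apply Polynomial.le_natDegree_of_ne_zero
    rw [bigP_coeff_top n hn β hβ]
    exact one_ne_zero

lemma bigP_bdd_coeff (n : ℕ) (β : Polynomial F) (s : ℕ) :
    Bdd 1 ((bigP n F β).coeff s) := by
  rw [bigP_coeff]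
  refine ((Bdd.add (Bdd.add ?_ ?_) ?_) |>.add ?_)
  · split_ifs
    · exact bdd_one.mono (by omega)
    · exact bdd_zero 1
  · apply bdd_sum
    intro i _
    split_ifs
    · exact bdd_C (by rw [MvPolynomial.totalDegree_X])
    · exact bdd_zero 1
  · exact bdd_C (by rw [MvPolynomial.totalDegree_C]; omega)
  · split_ifs
    · exact bdd_X
    · exact bdd_zero 1

lemma bigP_bdd_pdisc (n : ℕ) (hn : 2 ≤ n) (β : Polynomial F)
    (hβ : β.degree < (n : WithBot ℕ)) :
    Bdd (2 * (n - 1)) (pdisc (bigP n F β)) := by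
  have h := bdd_pdisc hn (bigP n F β) (bigP_natDegree n hn β hβ)
    (bigP_bdd_coeff n β)
    (by rw [bigP_coeff_top n hn β hβ]; exact bdd_one)
  exact (by omega : 2 * n - 2 = 2 * (n - 1)) ▸ h

end Specific


/-- For `f(x) = x^n + a_{n-1}x^{n-1} + ⋯ + a_1 x` with indeterminate coefficients over `F_q`
and a polynomial `α` of degree `< n`, the resultant `R(a) = Res_t(D_f(t), D_{f+α}(t))`
(taken with respect to formal degree `n-1` in `t` for both polynomials) has total degree at
most `3(n-1)²` as a polynomial in `a_1, …, a_{n-1}`. -/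
theorem resultant_totalDegree_le (q n : ℕ) (hq : Odd q) (hn : 2 ≤ n)
    (F : Type) [Field F] [Fintype F] (hF : Fintype.card F = q)
    (α : Polynomial F) (hα : α ≠ 0) (hdeg : α.degree < n)
    (Df Dfα : Polynomial (MvPolynomial (Fin (n - 1)) F))
    (hDf : Df = pdisc ((X : Polynomial (Polynomial (MvPolynomial (Fin (n - 1)) F))) ^ n
        + ∑ i : Fin (n - 1),
            Polynomial.C (Polynomial.C (MvPolynomial.X i)) * X ^ ((i : ℕ) + 1)
        + Polynomial.C Polynomial.X))
    (hDfα : Dfα = pdisc ((X : Polynomial (Polynomial (MvPolynomial (Fin (n - 1)) F))) ^ n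
        + ∑ i : Fin (n - 1),
            Polynomial.C (Polynomial.C (MvPolynomial.X i)) * X ^ ((i : ℕ) + 1)
        + α.map ((Polynomial.C : MvPolynomial (Fin (n - 1)) F →+*
            Polynomial (MvPolynomial (Fin (n - 1)) F)).comp
            (MvPolynomial.C : F →+* MvPolynomial (Fin (n - 1)) F))
        + Polynomial.C Polynomial.X)) :
    (presultant (n - 1) (n - 1) Df Dfα).totalDegree ≤ 3 * (n - 1) ^ 2 := by
  have hN : Bdd (2 * (n - 1)) Df := by
    rw [hDf]
    have h0 : ((0 : Polynomial F).degree < (n : WithBot ℕ)) := by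
      rw [Polynomial.degree_zero]; exact WithBot.bot_lt_coe n
    have h := bigP_bdd_pdisc (F := F) n hn 0 h0
    unfold bigP at h
    rwa [Polynomial.map_zero, add_zero] at h
  have hNα : Bdd (2 * (n - 1)) Dfα := by
    rw [hDfα]
    have h := bigP_bdd_pdisc (F := F) n hn α hdeg
    unfold bigP at h
    exact h
  exact totalDegree_presultant_le (n - 1) Df Dfα hN hNα
end
end

section
/- Let q be an odd prime power, n ≥ 2, and let α ∈ F_q[x] be a nonzero polynomial with deg α < n. Then there exists a = (a_1,…,a_{n−1}) in the algebraic closure F̄_q of F_q such that, writing f(x) = x^n + a_{n−1}x^{n−1} + ⋯ + a_1 x, the polynomials D_f(t) = disc_x(f(x)+t) and D_{f+α}(t) = disc_x(f(x)+α(x)+t) in F̄_q[t] are both nonzero and have no common root in F̄_q. Equivalently, the polynomial function a ↦ Res_t(D_f(t), D_{f+α}(t)) on F̄_q^{n−1} is not identically zero. -/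
open Polynomial

noncomputable section
open scoped Classical

lemma sylvester_det_ne_zero {K : Type*} [Field K] (m n : ℕ) (hm : 1 ≤ m) (hn : 1 ≤ n)
    (P Q : Polynomial K) (hPd : P.natDegree = m) (hP : P.Monic)
    (hQ : Q ≠ 0) (hQd : Q.natDegree ≤ n) (hcop : IsCoprime P Q) :
    (sylvesterMatrix m n P Q).det ≠ 0 := by
  intro hdet
  obtain ⟨v, hv, hMv⟩ := Matrix.exists_vecMul_eq_zero_iff.2 hdet
  set A : Polynomial K := ∑ i : Fin n, C (v (Fin.castAdd m i)) * X ^ (n - 1 - (i : ℕ)) with hA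
  set B : Polynomial K := ∑ i : Fin m, C (v (Fin.natAdd n i)) * X ^ (m - 1 - (i : ℕ)) with hB
  have hrow : ∀ j : Fin (n + m),
      (A * P + B * Q).coeff (n + m - 1 - (j : ℕ)) =
        ∑ i : Fin (n + m), v i * sylvesterMatrix m n P Q i j := by
    intro j
    have hj : (j : ℕ) < n + m := j.isLt
    rw [coeff_add, hA, hB, Finset.sum_mul, Finset.sum_mul, finset_sum_coeff, finset_sum_coeff,
      Fin.sum_univ_add]
    congr 1
    · refine Finset.sum_congr rfl fun i _ => ?_
      have hi : (i : ℕ) < n := i.isLt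
      rw [mul_right_comm, coeff_mul_X_pow']
      simp only [sylvesterMatrix, Matrix.of_apply, Fin.coe_castAdd]
      rw [if_pos hi]
      by_cases h1 : (j : ℕ) ≤ m + (i : ℕ)
      · have e1 : n - 1 - (i : ℕ) ≤ n + m - 1 - (j : ℕ) := by omega
        have e2 : (n + m - 1 - (j : ℕ)) - (n - 1 - (i : ℕ)) = m + (i : ℕ) - j := by omega
        rw [if_pos e1, e2, coeff_C_mul]
        by_cases h2 : (i : ℕ) ≤ (j : ℕ)
        · rw [if_pos ⟨h2, by omega⟩]
        · rw [if_neg (by omega), coeff_eq_zero_of_natDegree_lt (by omega), mul_zero]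
      · rw [if_neg (by omega), if_neg (by omega), mul_zero]
    · refine Finset.sum_congr rfl fun i _ => ?_
      have hi : (i : ℕ) < m := i.isLt
      rw [mul_right_comm, coeff_mul_X_pow']
      simp only [sylvesterMatrix, Matrix.of_apply, Fin.coe_natAdd]
      rw [if_neg (show ¬ (n + (i : ℕ) < n) by omega)]
      by_cases h1 : (j : ℕ) ≤ n + (i : ℕ)
      · have e1 : m - 1 - (i : ℕ) ≤ n + m - 1 - (j : ℕ) := by omega
        have e2 : (n + m - 1 - (j : ℕ)) - (m - 1 - (i : ℕ)) = n + (i : ℕ) - j := by omega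
        rw [if_pos e1, e2, coeff_C_mul]
        by_cases h2 : (i : ℕ) ≤ (j : ℕ)
        · rw [if_pos (show n + (i : ℕ) - n ≤ (j : ℕ) ∧ (j : ℕ) ≤ n + (i : ℕ) from ⟨by omega, h1⟩)]
        · rw [if_neg (show ¬ (n + (i : ℕ) - n ≤ (j : ℕ) ∧ (j : ℕ) ≤ n + (i : ℕ)) by omega),
            coeff_eq_zero_of_natDegree_lt (show Q.natDegree < n + (i : ℕ) - (j : ℕ) by omega), mul_zero]
      · rw [if_neg (show ¬ (m - 1 - (i : ℕ) ≤ n + m - 1 - (j : ℕ)) by omega),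
          if_neg (show ¬ (n + (i : ℕ) - n ≤ (j : ℕ) ∧ (j : ℕ) ≤ n + (i : ℕ)) by omega), mul_zero]
  have hdegA : A.natDegree ≤ n - 1 := by
    refine natDegree_sum_le_of_forall_le _ _ fun i _ => ?_
    refine le_trans (natDegree_C_mul_le _ _) ?_
    rw [natDegree_X_pow]; omega
  have hdegB : B.natDegree ≤ m - 1 := by
    refine natDegree_sum_le_of_forall_le _ _ fun i _ => ?_
    refine le_trans (natDegree_C_mul_le _ _) ?_
    rw [natDegree_X_pow]; omega
  have hkey : A * P + B * Q = 0 := by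
    refine Polynomial.ext fun k => ?_
    rw [coeff_zero]
    by_cases hk : k < n + m
    · have h := hrow ⟨n + m - 1 - k, by omega⟩
      have hk' : n + m - 1 - (n + m - 1 - k) = k := by omega
      rw [hk'] at h
      rw [h]
      have h0 := congrFun hMv ⟨n + m - 1 - k, by omega⟩
      simpa [Matrix.vecMul, dotProduct] using h0
    · refine coeff_eq_zero_of_natDegree_lt (lt_of_le_of_lt ?_ (by omega : n + m - 1 < k))
      refine le_trans (natDegree_add_le _ _) ?_
      refine max_le ?_ ?_
      · refine le_trans natDegree_mul_le ?_; omega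
      · refine le_trans natDegree_mul_le ?_; omega
  have hAP : A * P = -(B * Q) := by
    rw [eq_neg_iff_add_eq_zero]; exact hkey
  have hPdvd : P ∣ B * Q := by
    refine ⟨-A, ?_⟩
    rw [mul_neg, mul_comm P A, hAP, neg_neg]
  have hB0 : B = 0 := by
    by_contra hB0
    have := Polynomial.natDegree_le_of_dvd (hcop.dvd_of_dvd_mul_right hPdvd) hB0
    omega
  have hA0 : A = 0 := by
    have h1 : A * P = 0 := by rw [hAP, hB0, zero_mul, neg_zero]
    rcases mul_eq_zero.1 h1 with h | h
    · exact h
    · exact absurd h hP.ne_zero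
  apply hv
  funext i
  show v i = 0
  refine Fin.addCases (motive := fun i => v i = 0) ?_ ?_ i
  · intro i0
    have hc : A.coeff (n - 1 - (i0 : ℕ)) = v (Fin.castAdd m i0) := by
      rw [hA, finset_sum_coeff, Finset.sum_eq_single i0]
      · rw [coeff_C_mul, coeff_X_pow, if_pos rfl, mul_one]
      · intro i _ hne
        rw [coeff_C_mul, coeff_X_pow, if_neg, mul_zero]
        intro hcontra
        have h1 := i.isLt
        have h2 := i0.isLt
        exact hne (Fin.ext (by omega))
      · intro h; exact absurd (Finset.mem_univ i0) h
    rw [← hc, hA0, coeff_zero]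
  · intro i0
    have hc : B.coeff (m - 1 - (i0 : ℕ)) = v (Fin.natAdd n i0) := by
      rw [hB, finset_sum_coeff, Finset.sum_eq_single i0]
      · rw [coeff_C_mul, coeff_X_pow, if_pos rfl, mul_one]
      · intro i _ hne
        rw [coeff_C_mul, coeff_X_pow, if_neg, mul_zero]
        intro hcontra
        have h1 := i.isLt
        have h2 := i0.isLt
        exact hne (Fin.ext (by omega))
      · intro h; exact absurd (Finset.mem_univ i0) h
    rw [← hc, hB0, coeff_zero]

lemma pdisc_eq_zero_imp {K : Type*} [Field K] [IsAlgClosed K] (h : Polynomial K)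
    (hh : h.Monic) (hN : 2 ≤ h.natDegree) (hd : Polynomial.derivative h ≠ 0)
    (h0 : pdisc h = 0) :
    ∃ x, h.eval x = 0 ∧ (Polynomial.derivative h).eval x = 0 := by
  have hdet : (sylvesterMatrix h.natDegree (h.natDegree - 1) h (Polynomial.derivative h)).det = 0 := by
    rcases mul_eq_zero.1 h0 with hs | hp
    · exact absurd hs (pow_ne_zero _ (by norm_num))
    · exact hp
  by_contra hno
  push_neg at hno
  have hcop : IsCoprime h (Polynomial.derivative h) := by
    by_contra hnc
    set gd := EuclideanDomain.gcd h (Polynomial.derivative h) with hgd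
    have hgd0 : gd ≠ 0 := fun hz => hd (EuclideanDomain.gcd_eq_zero_iff.1 hz).2
    have hgdeg : gd.degree ≠ 0 := fun hdeg =>
      hnc (EuclideanDomain.gcd_isUnit_iff.1 (isUnit_iff_degree_eq_zero.2 hdeg))
    obtain ⟨x, hx⟩ := IsAlgClosed.exists_root gd hgdeg
    have hx0 : gd.eval x = 0 := hx
    have hxh : h.eval x = 0 := by
      have h2 := eval_dvd (x := x) (EuclideanDomain.gcd_dvd_left h (Polynomial.derivative h))
      rw [← hgd, hx0] at h2
      exact zero_dvd_iff.1 h2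
    have hxd : (Polynomial.derivative h).eval x = 0 := by
      have h2 := eval_dvd (x := x) (EuclideanDomain.gcd_dvd_right h (Polynomial.derivative h))
      rw [← hgd, hx0] at h2
      exact zero_dvd_iff.1 h2
    exact hno x hxh hxd
  exact sylvester_det_ne_zero h.natDegree (h.natDegree - 1) (by omega) (by omega)
    h (Polynomial.derivative h) rfl hh hd (Polynomial.natDegree_derivative_le h) hcop hdet

lemma presultant_map {R S : Type*} [CommRing R] [CommRing S] (φ : R →+* S) (m n : ℕ)
    (P Q : Polynomial R) :
    φ (presultant m n P Q) = presultant m n (P.map φ) (Q.map φ) := by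
  rw [presultant, presultant, RingHom.map_det]
  congr 1
  refine Matrix.ext fun i j => ?_
  simp only [RingHom.mapMatrix_apply, Matrix.map_apply, sylvesterMatrix, Matrix.of_apply]
  split_ifs <;> simp [coeff_map]

lemma pdisc_map {R S : Type*} [CommRing R] [CommRing S] (φ : R →+* S) (P : Polynomial R)
    (hdeg : (P.map φ).natDegree = P.natDegree) :
    φ (pdisc P) = pdisc (P.map φ) := by
  rw [pdisc, pdisc, map_mul, map_pow, map_neg, map_one, hdeg, presultant_map, ← derivative_map]

lemma eval_Dpoly {K : Type*} [Field K] (g : Polynomial K) (hg : g.Monic)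
    (hN : 1 ≤ g.natDegree) (ρ : K) :
    (Dpoly g).eval ρ = pdisc (g + C ρ) := by
  have hmapG : (g.map (C : K →+* Polynomial K) + C X).map (evalRingHom ρ) = g + C ρ := by
    rw [Polynomial.map_add, Polynomial.map_map, map_C]
    congr 1
    · have h1 : (evalRingHom ρ).comp (C : K →+* Polynomial K) = RingHom.id K := by
        refine RingHom.ext fun a => ?_
        simp
      rw [h1, Polynomial.map_id]
    · simp
  have hdeg : ((g.map (C : K →+* Polynomial K) + C X).map (evalRingHom ρ)).natDegree
      = (g.map (C : K →+* Polynomial K) + C X).natDegree := by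
    rw [hmapG, natDegree_add_C, natDegree_add_C, hg.natDegree_map]
  have h1 : (evalRingHom ρ) (pdisc (g.map (C : K →+* Polynomial K) + C X))
      = pdisc (g + C ρ) := by
    rw [pdisc_map _ _ hdeg, hmapG]
  have h2 : (Dpoly g).eval ρ
      = (evalRingHom ρ) (pdisc (g.map (C : K →+* Polynomial K) + C X)) := by
    rw [Dpoly, coe_evalRingHom]
  rw [h2, h1]

lemma Dpoly_ne_zero {K : Type*} [Field K] [IsAlgClosed K] (g : Polynomial K) (hg : g.Monic)
    (hN : 2 ≤ g.natDegree) (hd : Polynomial.derivative g ≠ 0) : Dpoly g ≠ 0 := by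
  obtain ⟨ρ, hρ⟩ := Infinite.exists_notMem_finset
    (((Polynomial.derivative g).roots.toFinset).image fun θ => -(g.eval θ))
  intro h0
  apply hρ
  have hmono : (g + C ρ).Monic :=
    hg.add_of_left (lt_of_le_of_lt degree_C_le (natDegree_pos_iff_degree_pos.1 (by omega)))
  have hdeg2 : (g + C ρ).natDegree = g.natDegree := natDegree_add_C
  have hder : Polynomial.derivative (g + C ρ) = Polynomial.derivative g := by simp
  have hpd : pdisc (g + C ρ) = 0 := by
    rw [← eval_Dpoly g hg (by omega) ρ, h0, eval_zero]
  obtain ⟨x, hx1, hx2⟩ := pdisc_eq_zero_imp (g + C ρ) hmono (by omega)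
    (by rw [hder]; exact hd) hpd
  rw [hder] at hx2
  refine Finset.mem_image.2 ⟨x, Multiset.mem_toFinset.2 ((mem_roots hd).2 hx2), ?_⟩
  rw [eval_add, eval_C] at hx1
  exact neg_eq_of_add_eq_zero_right hx1

lemma fPoly_eq_of {K : Type*} [Field K] (n : ℕ) (hn : 2 ≤ n) (h : Polynomial K)
    (hm : h.Monic) (hd : h.natDegree = n) (h0 : h.coeff 0 = 0) :
    fPoly n (fun i => h.coeff ((i : ℕ) + 1)) = h := by
  refine Polynomial.ext fun k => ?_
  rw [fPoly, coeff_add, finset_sum_coeff, coeff_X_pow]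
  have hterm : ∀ i : Fin (n - 1),
      (C (h.coeff ((i : ℕ) + 1)) * X ^ ((i : ℕ) + 1)).coeff k
        = if k = (i : ℕ) + 1 then h.coeff k else 0 := by
    intro i
    rw [coeff_C_mul, coeff_X_pow]
    split_ifs with hki
    · rw [mul_one, hki]
    · rw [mul_zero]
  rw [Finset.sum_congr rfl fun i _ => hterm i]
  rcases Nat.lt_or_ge k n with hk | hk
  · rcases Nat.eq_zero_or_pos k with hk0 | hk1
    · subst hk0
      rw [if_neg (by omega), Finset.sum_eq_zero fun i _ => by rw [if_neg (by omega)],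
        h0, add_zero]
    · rw [if_neg (by omega), Finset.sum_eq_single (⟨k - 1, by omega⟩ : Fin (n - 1))]
      · rw [if_pos (by simp; omega), zero_add]
      · intro i _ hne
        rw [if_neg]
        intro hcontra
        have h1 := i.isLt
        exact hne (Fin.ext (by simp; omega))
      · intro hmem; exact absurd (Finset.mem_univ _) hmem
  · rcases Nat.eq_or_lt_of_le hk with hkn | hkn
    · rw [if_pos hkn.symm, Finset.sum_eq_zero fun i _ => by
        have := i.isLt; rw [if_neg (by omega)], add_zero, ← hkn, ← hd, hm.coeff_natDegree]
    · rw [if_neg (by omega), Finset.sum_eq_zero fun i _ => by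
        have := i.isLt; rw [if_neg (by omega)], add_zero,
        coeff_eq_zero_of_natDegree_lt (by omega)]

/-- **Proposition 3.1** (non-vanishing of the resultant): for a nonzero `α ∈ F_q[x]` of degree
`< n`, there is a coefficient vector `a` over the algebraic closure `F̄_q` such that
`D_{f_a}(t)` and `D_{f_a+α}(t)` are both nonzero and have no common root in `F̄_q`;
equivalently, `a ↦ Res_t(D_{f_a}, D_{f_a+α})` is not identically zero on `F̄_q^{n-1}`. -/
theorem resultant_not_identically_zero (q n : ℕ) (hq : Odd q) (hn : 2 ≤ n)
    (F : Type) [Field F] [Fintype F] (hF : Fintype.card F = q)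
    (α : Polynomial F) (hα : α ≠ 0) (hdeg : α.degree < n) :
    ∃ a : Fin (n - 1) → AlgebraicClosure F,
      Dpoly (fPoly n a) ≠ 0 ∧
      Dpoly (fPoly n a + α.map (algebraMap F (AlgebraicClosure F))) ≠ 0 ∧
      ¬ ∃ ρ : AlgebraicClosure F,
          Polynomial.eval ρ (Dpoly (fPoly n a)) = 0 ∧
          Polynomial.eval ρ (Dpoly (fPoly n a + α.map (algebraMap F (AlgebraicClosure F)))) = 0 := by
  set K := AlgebraicClosure F with hK
  set β : Polynomial K := α.map (algebraMap F K) with hβ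
  have hβ0 : β ≠ 0 := Polynomial.map_ne_zero hα
  have hβdeg : β.degree < (n : ℕ) := by
    rw [hβ, degree_map]; exact_mod_cast hdeg
  have hβnd : β.natDegree ≤ n - 1 := by
    have := (natDegree_lt_iff_degree_lt hβ0).2 hβdeg; omega
  suffices h : ∃ f : Polynomial K, f.Monic ∧ f.natDegree = n ∧ f.coeff 0 = 0 ∧
      Polynomial.derivative f ≠ 0 ∧ Polynomial.derivative (f + β) ≠ 0 ∧
      (∀ ρ : K, ¬ (pdisc (f + C ρ) = 0 ∧ pdisc (f + β + C ρ) = 0)) by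
    obtain ⟨f, hfm, hfd, hf0, hdf, hdg, hcom⟩ := h
    have hfp : fPoly n (fun i => f.coeff ((i : ℕ) + 1)) = f := fPoly_eq_of n hn f hfm hfd hf0
    have hdegf : f.degree = (n : ℕ) := by rw [degree_eq_natDegree hfm.ne_zero, hfd]
    have hfβm : (f + β).Monic := hfm.add_of_left (by rw [hdegf]; exact hβdeg)
    have hfβd : (f + β).natDegree = n := natDegree_eq_of_degree_eq_some
      (by rw [degree_add_eq_left_of_degree_lt (by rw [hdegf]; exact hβdeg), hdegf])
    refine ⟨fun i => f.coeff ((i : ℕ) + 1), ?_, ?_, ?_⟩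
    · rw [hfp]
      exact Dpoly_ne_zero f hfm (by omega) hdf
    · rw [hfp]
      exact Dpoly_ne_zero (f + β) hfβm (by omega) hdg
    · rintro ⟨ρ, h1, h2⟩
      rw [hfp] at h1 h2
      rw [eval_Dpoly f hfm (by omega) ρ] at h1
      rw [eval_Dpoly (f + β) hfβm (by omega) ρ] at h2
      exact hcom ρ ⟨h1, h2⟩
  by_cases hn0 : (n : K) = 0
  · -- characteristic divides n : take f = X^n + c X
    obtain ⟨c, hc⟩ := Infinite.exists_notMem_finset
      ({0, -((Polynomial.derivative β).coeff 0)} : Finset K)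
    have hc0 : c ≠ 0 := fun h => hc (by simp [h])
    have hcne : C c + Polynomial.derivative β ≠ 0 := by
      intro h
      have hdc : Polynomial.derivative β = C (-c) := by
        rw [map_neg]
        exact eq_neg_of_add_eq_zero_right h
      apply hc
      have : -((Polynomial.derivative β).coeff 0) = c := by rw [hdc, coeff_C_zero, neg_neg]
      rw [← this]
      simp
    set f : Polynomial K := X ^ n + C c * X with hf
    have hdXn : (X ^ n : Polynomial K).degree = (n : ℕ) := degree_X_pow n
    have hdcx : (C c * X : Polynomial K).degree < (X ^ n : Polynomial K).degree := by
      rw [hdXn, degree_C_mul_X hc0]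
      exact_mod_cast (by omega : 1 < n)
    have hfm : f.Monic := (monic_X_pow n).add_of_left hdcx
    have hfd : f.natDegree = n := natDegree_eq_of_degree_eq_some
      (by rw [hf, degree_add_eq_left_of_degree_lt hdcx, hdXn])
    have hf0 : f.coeff 0 = 0 := by
      rw [coeff_zero_eq_eval_zero, hf]
      simp [zero_pow (by omega : n ≠ 0)]
    have hderf : Polynomial.derivative f = C c := by
      rw [hf, derivative_add, derivative_X_pow, derivative_C_mul, derivative_X, mul_one]
      simp [hn0]
    have hCc : (C c : Polynomial K) ≠ 0 := fun h => hc0 (by simpa using congrArg (fun p => coeff p 0) h)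
    refine ⟨f, hfm, hfd, hf0, by rw [hderf]; exact hCc, ?_, ?_⟩
    · rw [derivative_add, hderf]; exact hcne
    · rintro ρ ⟨h1, _⟩
      have hmono1 : (f + C ρ).Monic :=
        hfm.add_of_left (lt_of_le_of_lt degree_C_le (natDegree_pos_iff_degree_pos.1 (by omega)))
      have hder1 : Polynomial.derivative (f + C ρ) = C c := by
        rw [derivative_add, derivative_C, add_zero, hderf]
      obtain ⟨x, hx1, hx2⟩ := pdisc_eq_zero_imp (f + C ρ) hmono1
        (by rw [natDegree_add_C, hfd]; omega) (by rw [hder1]; exact hCc) h1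
      rw [hder1, eval_C] at hx2
      exact hc0 hx2
  · -- characteristic does not divide n : take f = (X+b)^n - b^n for good b
    set β' := Polynomial.derivative β with hβ'
    set G : Polynomial K := C ((n : K) ^ n) * β ^ (n - 1) + β' ^ n with hGdef
    have hG0 : G ≠ 0 := by
      intro h0
      by_cases hb' : β' = 0
      · rw [hGdef, hb', zero_pow (by omega : n ≠ 0), add_zero] at h0
        rcases mul_eq_zero.1 h0 with h | h
        · exact hn0 ((pow_eq_zero_iff (by omega : n ≠ 0)).1 (C_eq_zero.1 h))
        · exact hβ0 ((pow_eq_zero_iff (by omega : n - 1 ≠ 0)).1 h)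
      · have h1 : β' ^ n = -(C ((n : K) ^ n) * β ^ (n - 1)) := by
          rw [hGdef] at h0; linear_combination h0
        have hd1 : 1 ≤ β.natDegree := by
          by_contra h2
          obtain ⟨x, hx⟩ := natDegree_eq_zero.1 (by omega : β.natDegree = 0)
          exact hb' (by rw [hβ', ← hx, derivative_C])
        have e1 : n * β'.natDegree = (n - 1) * β.natDegree := by
          have h2 := congrArg natDegree h1
          rwa [natDegree_pow, natDegree_neg, natDegree_C_mul (pow_ne_zero _ hn0),
            natDegree_pow] at h2
        have e2 : β'.natDegree ≤ β.natDegree - 1 := Polynomial.natDegree_derivative_le β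
        have c1 : (n : ℤ) * β'.natDegree = ((n : ℤ) - 1) * β.natDegree := by
          zify [show 1 ≤ n by omega] at e1; exact_mod_cast e1
        have c2 : (β'.natDegree : ℤ) + 1 ≤ (β.natDegree : ℤ) := by omega
        have c3 : (β.natDegree : ℤ) ≤ (n : ℤ) - 1 := by omega
        have c4 : (2 : ℤ) ≤ (n : ℤ) := by omega
        nlinarith [c1, c2, c3, c4]
    set S : Finset K := (β.roots.toFinset.image fun r => -r) ∪
        (G.roots.toFinset.image fun η => (n : K) * β.eval η * ((β'.eval η)⁻¹) - η) with hS
    obtain ⟨b, hb⟩ := Infinite.exists_notMem_finset S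
    set f : Polynomial K := (X + C b) ^ n - C (b ^ n) with hf
    have hXbm : ((X + C b) ^ n : Polynomial K).Monic := (monic_X_add_C b).pow n
    have hXbd : ((X + C b) ^ n : Polynomial K).natDegree = n := by
      rw [natDegree_pow, natDegree_X_add_C, mul_one]
    have hfm : f.Monic := by
      rw [hf, sub_eq_add_neg, ← map_neg C]
      exact hXbm.add_of_left (lt_of_le_of_lt degree_C_le
        (natDegree_pos_iff_degree_pos.1 (by omega)))
    have hfd : f.natDegree = n := by
      rw [hf, sub_eq_add_neg, ← map_neg C, natDegree_add_C, hXbd]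
    have hf0 : f.coeff 0 = 0 := by
      rw [coeff_zero_eq_eval_zero, hf]
      simp
    have hderf : Polynomial.derivative f = C ((n : K)) * (X + C b) ^ (n - 1) := by
      rw [hf, derivative_sub, derivative_C, sub_zero, derivative_pow, derivative_add,
        derivative_X, derivative_C, add_zero, mul_one]
    have hXb1 : (X + C b : Polynomial K) ≠ 0 := (monic_X_add_C b).ne_zero
    have hCn : (C ((n : K)) : Polynomial K) ≠ 0 := fun h => hn0 (C_eq_zero.1 h)
    have hdf : Polynomial.derivative f ≠ 0 := by
      rw [hderf]; exact mul_ne_zero hCn (pow_ne_zero _ hXb1)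
    have hdegCpow : (C ((n : K)) * (X + C b) ^ (n - 1)).natDegree = n - 1 := by
      rw [natDegree_C_mul hn0, natDegree_pow, natDegree_X_add_C, mul_one]
    have hβ'nd : β'.natDegree ≤ n - 2 :=
      le_trans (Polynomial.natDegree_derivative_le β) (by omega)
    have hdg : Polynomial.derivative (f + β) ≠ 0 := by
      rw [derivative_add, hderf, ← hβ']
      intro h
      have h1 : β' = -(C ((n : K)) * (X + C b) ^ (n - 1)) := by linear_combination h
      have h2 := congrArg natDegree h1
      rw [natDegree_neg, hdegCpow] at h2
      omega
    refine ⟨f, hfm, hfd, hf0, hdf, hdg, ?_⟩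
    rintro ρ ⟨h1, h2⟩
    have hmono1 : (f + C ρ).Monic :=
      hfm.add_of_left (lt_of_le_of_lt degree_C_le (natDegree_pos_iff_degree_pos.1 (by omega)))
    have hder1 : Polynomial.derivative (f + C ρ) = C ((n : K)) * (X + C b) ^ (n - 1) := by
      rw [derivative_add, derivative_C, add_zero, hderf]
    obtain ⟨x, hx1, hx2⟩ := pdisc_eq_zero_imp (f + C ρ) hmono1
      (by rw [natDegree_add_C, hfd]; omega)
      (by rw [hder1]; exact mul_ne_zero hCn (pow_ne_zero _ hXb1)) h1
    rw [hder1] at hx2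
    have hxb : x + b = 0 := by
      have h3 : (n : K) * (x + b) ^ (n - 1) = 0 := by simpa using hx2
      rcases mul_eq_zero.1 h3 with h | h
      · exact absurd h hn0
      · exact (pow_eq_zero_iff (by omega : n - 1 ≠ 0)).1 h
    have hρ : ρ = b ^ n := by
      have h4 := hx1
      rw [eval_add, eval_C, hf, eval_sub, eval_pow, eval_add, eval_X, eval_C, eval_C] at h4
      rw [hxb, zero_pow (by omega : n ≠ 0)] at h4
      linear_combination h4
    subst hρ
    -- now analyze the second discriminant
    have hdegf : f.degree = (n : ℕ) := by rw [degree_eq_natDegree hfm.ne_zero, hfd]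
    have hfβm : (f + β).Monic := hfm.add_of_left (by rw [hdegf]; exact hβdeg)
    have hfβd : (f + β).natDegree = n := natDegree_eq_of_degree_eq_some
      (by rw [degree_add_eq_left_of_degree_lt (by rw [hdegf]; exact hβdeg), hdegf])
    have hmono2 : (f + β + C (b ^ n)).Monic :=
      hfβm.add_of_left (lt_of_le_of_lt degree_C_le (natDegree_pos_iff_degree_pos.1 (by omega)))
    obtain ⟨y, hy1, hy2⟩ := pdisc_eq_zero_imp (f + β + C (b ^ n)) hmono2
      (by rw [natDegree_add_C, hfβd]; omega)
      (by rw [derivative_add, derivative_C, add_zero]; exact hdg) h2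
    rw [derivative_add, derivative_C, add_zero, derivative_add, hderf, ← hβ'] at hy2
    have e2 : (n : K) * (y + b) ^ (n - 1) + β'.eval y = 0 := by simpa using hy2
    have e1 : (y + b) ^ n + β.eval y = 0 := by
      have h5 := hy1
      have hsum : f + β + C (b ^ n) = (X + C b) ^ n + β := by rw [hf]; ring
      rw [hsum] at h5
      simpa using h5
    set u : K := y + b with hudef
    set A : K := β.eval y with hAdef
    set A' : K := β'.eval y with hA'def
    by_cases hA' : A' = 0
    · have hu : u = 0 := by
        have h3 : (n : K) * u ^ (n - 1) = 0 := by
          have := e2; rw [hA', add_zero] at this; exact this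
        rcases mul_eq_zero.1 h3 with h | h
        · exact absurd h hn0
        · exact (pow_eq_zero_iff (by omega : n - 1 ≠ 0)).1 h
      have hA0 : A = 0 := by
        have := e1; rw [hu, zero_pow (by omega : n ≠ 0), zero_add] at this; exact this
      apply hb
      rw [hS]
      apply Finset.mem_union_left
      refine Finset.mem_image.2 ⟨-b, Multiset.mem_toFinset.2 ((mem_roots hβ0).2 ?_), by rw [neg_neg]⟩
      show β.eval (-b) = 0
      have hy : y = -b := by linear_combination hu
      rw [← hy]
      exact hA0
    · have hA'e : A' = -((n : K) * u ^ (n - 1)) := by linear_combination e2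
      have hAe : u ^ n = -A := by linear_combination e1
      have hsign : ((-1 : K)) ^ n * ((-1 : K)) ^ (n - 1) = -1 := by
        rw [← pow_add]
        exact Odd.neg_one_pow ⟨n - 1, by omega⟩
      have hA'n : A' ^ n = -((n : K) ^ n * A ^ (n - 1)) := by
        have key : A' ^ n = ((-1 : K)) ^ n * ((n : K) ^ n * (u ^ (n - 1)) ^ n) := by
          rw [hA'e]; ring
        have key2 : (u ^ (n - 1)) ^ n = (u ^ n) ^ (n - 1) := by
          rw [← pow_mul, ← pow_mul, Nat.mul_comm]
        have key3 : (u ^ n) ^ (n - 1) = ((-1 : K)) ^ (n - 1) * A ^ (n - 1) := by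
          rw [hAe]; ring
        rw [key, key2, key3]
        linear_combination ((n : K) ^ n * A ^ (n - 1)) * hsign
      have hGy : G.eval y = 0 := by
        rw [hGdef, eval_add, eval_mul, eval_C, eval_pow, eval_pow, ← hAdef, ← hA'def, hA'n]
        ring
      have huA : A' * u = (n : K) * A := by
        have h4 : u ^ (n - 1) * u = u ^ n := by
          rw [← pow_succ]; congr 1; omega
        calc A' * u = -((n : K) * u ^ (n - 1)) * u := by rw [hA'e]
          _ = -((n : K) * (u ^ (n - 1) * u)) := by ring
          _ = -((n : K) * u ^ n) := by rw [h4]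
          _ = -((n : K) * (-A)) := by rw [hAe]
          _ = (n : K) * A := by ring
      have hbval : (n : K) * A * A'⁻¹ - y = b := by
        have hu : u = (n : K) * A * A'⁻¹ := by
          rw [eq_mul_inv_iff_mul_eq₀ hA']
          linear_combination huA
        rw [← hu, hudef]; ring
      apply hb
      rw [hS]
      apply Finset.mem_union_right
      exact Finset.mem_image.2 ⟨y, Multiset.mem_toFinset.2 ((mem_roots hG0).2 hGy), hbval⟩
end
end
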